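/- For every x ∈ ℝ: (a) Λ_x(I₃) = I₃; (b) for every 3×3 complex matrix A with Aᵀ = A and Tr(A) = 0, Λ_x(A) = (1 − 3x/2)·A; (c) for every 3×3 complex matrix B with Bᵀ = −B, Λ_x(B) = (1 − x/2)·B. Hence Λ_x has eigenvalue 1 (multiplicity 1), eigenvalue 1 − 3x/2 (multiplicity 5) and eigenvalue 1 − x/2 (multiplicity 3). -/
import Mathlib


open Matrix

/-- The interpolated Landau–Streater/Werner–Holevo channel
`Λ_x(ρ) = (1−x)·ρ + (x/2)·(Tr(ρ)·I₃ − ρᵀ)`. -/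
noncomputable def Lam (x : ℝ) (ρ : Matrix (Fin 3) (Fin 3) ℂ) : Matrix (Fin 3) (Fin 3) ℂ :=
  ((1 : ℂ) - (x : ℂ)) • ρ + ((x : ℂ) / 2) • (ρ.trace • (1 : Matrix (Fin 3) (Fin 3) ℂ) - ρᵀ)

/-- Spectral decomposition of `Λ_x`:
(a) the identity is fixed, `Λ_x(I₃) = I₃`;
(b) traceless symmetric matrices are eigenvectors with eigenvalue `1 − 3x/2`;
(c) antisymmetric matrices are eigenvectors with eigenvalue `1 − x/2`.
(Hence `Λ_x` has eigenvalue `1` with multiplicity `1`, eigenvalue `1 − 3x/2`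
with multiplicity `5`, and eigenvalue `1 − x/2` with multiplicity `3`.) -/
theorem lam_spectrum (x : ℝ) :
    Lam x (1 : Matrix (Fin 3) (Fin 3) ℂ) = 1 ∧
    (∀ A : Matrix (Fin 3) (Fin 3) ℂ, Aᵀ = A → A.trace = 0 →
      Lam x A = ((1 : ℂ) - 3 * (x : ℂ) / 2) • A) ∧
    (∀ B : Matrix (Fin 3) (Fin 3) ℂ, Bᵀ = -B →
      Lam x B = ((1 : ℂ) - (x : ℂ) / 2) • B) := by
  refine ⟨?_, ?_, ?_⟩
  · simp only [Lam, transpose_one, trace_one]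
    have : ((Fintype.card (Fin 3) : ℂ)) = 3 := by simp
    rw [this]
    module
  · intro A hA hTr
    simp only [Lam, hA, hTr, zero_smul, zero_sub]
    module
  · intro B hB
    have hTr : B.trace = 0 := by
      have := congrArg Matrix.trace hB
      simp [trace_transpose] at this
      linear_combination (this : B.trace = -B.trace) / 2
    simp only [Lam, hB, hTr, zero_smul, zero_sub, neg_neg]
    module
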